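/- Let G be a finite group and S a nontrivial abelian subgroup of G such that C_G(y) = S for every non-identity element y ∈ S. Then S is a Hall subgroup of G, i.e., |S| is coprime to the index [G : S]. -/

import Mathlib

theorem stmt_8 {G : Type*} [Group G] [Finite G] (S : Subgroup G)
    (hcomm : IsMulCommutative S) (hne : S ≠ ⊥)
    (hcent : ∀ y : G, y ∈ S → y ≠ 1 → Subgroup.centralizer {y} = S) :
    Nat.Coprime (Nat.card S) S.index := by
  by_contra h
  obtain ⟨p, hp, hpdvd⟩ := Nat.exists_prime_and_dvd h
  haveI := Fact.mk hp
  have hpS : p ∣ Nat.card S := hpdvd.trans (Nat.gcd_dvd_left _ _)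
  have hpI : p ∣ S.index := hpdvd.trans (Nat.gcd_dvd_right _ _)
  haveI : Fintype S := Fintype.ofFinite S
  rw [Nat.card_eq_fintype_card] at hpS
  obtain ⟨g, hg⟩ := exists_prime_orderOf_dvd_card (G := S) p hpS
  set y : G := (g : G) with hy
  have hyS : y ∈ S := g.2
  have hyo : orderOf y = p := by rw [hy, Subgroup.orderOf_coe, hg]
  have hy1 : y ≠ 1 := by
    intro h1
    rw [h1, orderOf_one] at hyo
    exact hp.one_lt.ne' hyo.symm
  have hPy : IsPGroup p (Subgroup.zpowers y) :=
    IsPGroup.of_card (n := 1) (by rw [Nat.card_zpowers, hyo, pow_one])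
  obtain ⟨P, hleP⟩ := hPy.exists_le_sylow
  have hyP : y ∈ (P : Subgroup G) := hleP (Subgroup.mem_zpowers y)
  haveI : Nontrivial (P : Subgroup G) :=
    ⟨⟨⟨y, hyP⟩, 1, by simp [hy1]⟩⟩
  haveI : Nontrivial (Subgroup.center (P : Subgroup G)) := P.2.center_nontrivial
  obtain ⟨z', hz'⟩ := exists_ne (1 : Subgroup.center (P : Subgroup G))
  set z : G := ((z' : (P : Subgroup G)) : G) with hz
  have hz1 : z ≠ 1 := by
    intro h1
    apply hz'
    ext
    exact h1
  have hzcomm : ∀ g ∈ (P : Subgroup G), g * z = z * g := by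
    intro a ha
    have := (Subgroup.mem_center_iff.mp z'.2) ⟨a, ha⟩
    exact congrArg Subtype.val this
  -- z centralizes y, hence z ∈ S
  have hzS : z ∈ S := by
    rw [← hcent y hyS hy1]
    intro a ha
    rw [Set.mem_singleton_iff] at ha
    subst ha
    exact hzcomm y hyP
  -- P ≤ centralizer {z} = S
  have hPS : (P : Subgroup G) ≤ S := by
    rw [← hcent z hzS hz1]
    intro a haP b hb
    rw [Set.mem_singleton_iff] at hb
    subst hb
    exact (hzcomm a haP).symm
  have hdvd : S.index ∣ (P : Subgroup G).index := Subgroup.index_dvd_of_le hPS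
  exact P.not_dvd_index (hpI.trans hdvd)
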